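/- Let m = 4 and θ_1, θ_2, θ_3, θ_4 ∈ (0, π) be dihedral angles around an interior (singular) edge with θ_1 + θ_2 = θ_2 + θ_3 = π (hence θ_1 = θ_3, θ_2 = θ_4, θ_1 + θ_4 = π). With face normals n_1, ..., n_4 and tangents t_1, ..., t_4 as in the patch setup, the piecewise-constant symmetric tensor field T defined by T n_1 = n_1 + cot(θ_1) t_1 and T n_j = 0 for j = 2, 3, 4 is normal-continuous across all four interior faces and satisfies n_1^T T n_1 = 1 and n_j^T T n_j = 0 for j = 2, 3, 4. -/

import Mathlib

open Matrix

private lemma vmv_mulVec (u w x : Fin 3 → ℝ) :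
    vecMulVec u w *ᵥ x = (w ⬝ᵥ x) • u := by
  ext i
  simp [mulVec, vecMulVec_apply, dotProduct, Finset.mul_sum, mul_comm, mul_left_comm]

private lemma vmv_symm (v : Fin 3 → ℝ) : (vecMulVec v v).IsSymm := by
  ext i j; simp [vecMulVec_apply, mul_comm]

/-- Singular-edge construction (`m = 4`, `θ_1 + θ_2 = θ_2 + θ_3 = π`): the
piecewise-constant symmetric tensor field `T` with `T n_1 = n_1 + cot(θ_1) t_1`
and `T n_j = 0` for `j = 2,3,4` is normal-continuous and has `n_1ᵀ T n_1 = 1`,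
`n_jᵀ T n_j = 0` for `j = 2,3,4`. -/
theorem stmt9 (θ : Fin 4 → ℝ) (hθ : ∀ j, θ j ∈ Set.Ioo 0 Real.pi)
    (hsing1 : θ 0 + θ 1 = Real.pi) (hsing2 : θ 1 + θ 2 = Real.pi)
    (hsum : θ 0 + θ 1 + θ 2 + θ 3 = 2 * Real.pi)
    (t : Fin 3 → ℝ) (htu : t ⬝ᵥ t = 1)
    (n : Fin 4 → Fin 3 → ℝ) (hn : ∀ j, n j ⬝ᵥ n j = 1) (hnt : ∀ j, n j ⬝ᵥ t = 0)
    (tj : Fin 4 → Fin 3 → ℝ) (htj : ∀ j, tj j = crossProduct (n j) t)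
    (hrot1 : ∀ j, n (j + 1) = Real.cos (θ j) • n j - Real.sin (θ j) • tj j)
    (hrot2 : ∀ j, n j = Real.cos (θ j) • n (j + 1) + Real.sin (θ j) • tj (j + 1)) :
    ∃ T : Fin 4 → Matrix (Fin 3) (Fin 3) ℝ,
      (∀ j, (T j).IsSymm) ∧
      (∀ j, T j *ᵥ n (j + 1) = T (j + 1) *ᵥ n (j + 1)) ∧
      T 0 *ᵥ n 0 = n 0 + (Real.cos (θ 0) / Real.sin (θ 0)) • tj 0 ∧
      (∀ j : Fin 4, j ≠ 0 → T j *ᵥ n j = 0) ∧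
      n 0 ⬝ᵥ (T 0 *ᵥ n 0) = 1 ∧
      (∀ j : Fin 4, j ≠ 0 → n j ⬝ᵥ (T j *ᵥ n j) = 0) := by
  have hsin : Real.sin (θ 0) ≠ 0 :=
    ne_of_gt (Real.sin_pos_of_pos_of_lt_pi (hθ 0).1 (hθ 0).2)
  set c : ℝ := Real.cos (θ 0) / Real.sin (θ 0) with hc
  set v : Fin 3 → ℝ := n 0 + c • tj 0 with hv
  -- basic dot product facts
  have hn0 : n 0 0 ^ 2 + n 0 1 ^ 2 + n 0 2 ^ 2 = 1 := by
    have := hn 0; simpa [dotProduct, Fin.sum_univ_three, sq] using this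
  have htu' : t 0 ^ 2 + t 1 ^ 2 + t 2 ^ 2 = 1 := by
    simpa [dotProduct, Fin.sum_univ_three, sq] using htu
  have hnt0 : n 0 0 * t 0 + n 0 1 * t 1 + n 0 2 * t 2 = 0 := by
    simpa [dotProduct, Fin.sum_univ_three] using hnt 0
  have htjtj : tj 0 ⬝ᵥ tj 0 = 1 := by
    rw [htj 0, cross_apply]
    simp only [dotProduct, Fin.sum_univ_three]
    simp only [Matrix.cons_val_zero, Matrix.cons_val_one, Matrix.head_cons,
      Matrix.cons_val_two, Matrix.tail_cons]
    nlinarith [hn0, htu', hnt0]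
  have hntj : n 0 ⬝ᵥ tj 0 = 0 := by
    rw [htj 0, cross_apply]
    simp only [dotProduct, Fin.sum_univ_three]
    simp only [Matrix.cons_val_zero, Matrix.cons_val_one, Matrix.head_cons,
      Matrix.cons_val_two, Matrix.tail_cons]
    ring
  -- v ⬝ n 0 = 1
  have hv0 : v ⬝ᵥ n 0 = 1 := by
    rw [hv, add_dotProduct, smul_dotProduct, dotProduct_comm (tj 0) (n 0), hntj,
      hn 0]
    simp
  -- v ⬝ n 1 = 0
  have hv1 : v ⬝ᵥ n 1 = 0 := by
    have h1 : n 1 = Real.cos (θ 0) • n 0 - Real.sin (θ 0) • tj 0 := by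
      have := hrot1 0; simpa using this
    rw [h1, hv]
    simp only [dotProduct_sub, dotProduct_smul, add_dotProduct, smul_dotProduct,
      smul_eq_mul]
    rw [hn 0, hntj, dotProduct_comm (tj 0) (n 0), hntj, htjtj, hc]
    field_simp
    ring
  -- θ 3 = π - θ 0
  have hθ3 : θ 3 = Real.pi - θ 0 := by linarith
  -- v ⬝ n 3 = 0
  have hv3 : v ⬝ᵥ n 3 = 0 := by
    have h3 : n 3 = Real.cos (θ 3) • n 0 + Real.sin (θ 3) • tj 0 := by
      have := hrot2 3
      have e : (3 : Fin 4) + 1 = 0 := by decide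
      rwa [e] at this
    rw [h3, hθ3, Real.cos_pi_sub, Real.sin_pi_sub, hv]
    simp only [dotProduct_add, dotProduct_smul, add_dotProduct, smul_dotProduct,
      smul_eq_mul]
    rw [hn 0, hntj, dotProduct_comm (tj 0) (n 0), hntj, htjtj, hc]
    field_simp
    ring
  -- the tensor field
  refine ⟨![vecMulVec v v, 0, 0, vecMulVec v v], ?_, ?_, ?_, ?_, ?_, ?_⟩
  · intro j
    fin_cases j <;>
      first
        | exact vmv_symm v
        | (show Matrix.IsSymm (0 : Matrix (Fin 3) (Fin 3) ℝ); ext i k; simp [Matrix.IsSymm])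
  · intro j
    fin_cases j
    · show vecMulVec v v *ᵥ n 1 = (0 : Matrix (Fin 3) (Fin 3) ℝ) *ᵥ n 1
      rw [vmv_mulVec, hv1]; simp
    · rfl
    · show (0 : Matrix (Fin 3) (Fin 3) ℝ) *ᵥ n 3 = vecMulVec v v *ᵥ n 3
      rw [vmv_mulVec, hv3]; simp
    · show vecMulVec v v *ᵥ n 0 = vecMulVec v v *ᵥ n 0
      rfl
  · show vecMulVec v v *ᵥ n 0 = n 0 + c • tj 0
    rw [vmv_mulVec, hv0, one_smul, hv]
  · intro j hj
    fin_cases j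
    · exact absurd rfl hj
    · simp
    · simp
    · show vecMulVec v v *ᵥ n 3 = 0
      rw [vmv_mulVec, hv3]; simp
  · show n 0 ⬝ᵥ (vecMulVec v v *ᵥ n 0) = 1
    rw [vmv_mulVec, hv0, one_smul, dotProduct_comm, hv0]
  · intro j hj
    fin_cases j
    · exact absurd rfl hj
    · simp
    · simp
    · show n 3 ⬝ᵥ (vecMulVec v v *ᵥ n 3) = 0
      rw [vmv_mulVec, hv3]; simp
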